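/- Let G be a graph and G* the construction from the Dalirrooyfard et al. reduction applied to G with pattern graph H and a minimum s-clique cover C = {C_1, ..., C_t} of H (using C_1 to form the independent-set copies of V_G). If G* contains a subgraph isomorphic to H, then G contains an s-clique. -/

import Mathlib

/-- The graph `G*` of the Dalirrooyfard et al. reduction (see paper): copies
`V_G × {i}` of the vertices of `G` for `i ∈ C₁`, each an independent set, plus one
copy of each vertex of `V_H \ C₁`, with adjacency inherited from `H` and `G`. -/
def GstarGraph {VG VH : Type*} (G : SimpleGraph VG) (H : SimpleGraph VH) (C1 : Set VH) :
    SimpleGraph ((VG × C1) ⊕ {j : VH // j ∉ C1}) where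
  Adj x y :=
    match x, y with
    | .inl (v, i), .inl (u, j) => H.Adj i j ∧ G.Adj v u
    | .inl (_, i), .inr j => H.Adj i j
    | .inr i, .inl (_, j) => H.Adj i j
    | .inr i, .inr j => H.Adj i j
  symm := by
    constructor
    rintro (⟨v, i⟩ | i) (⟨u, j⟩ | j) h
    · exact ⟨h.1.symm, h.2.symm⟩
    · exact h.symm
    · exact h.symm
    · exact h.symm
  loopless := by
    constructor
    rintro (⟨v, i⟩ | i) h
    · exact H.loopless.irrefl _ h.1
    · exact H.loopless.irrefl _ h

/-- An `s`-clique cover of `H`. -/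
def IsSCliqueCover {VH : Type*} [DecidableEq VH] (H : SimpleGraph VH) (s : ℕ)
    (𝒞 : Finset (Finset VH)) : Prop :=
  (∀ K : Finset VH, H.IsNClique s K → ∃ C ∈ 𝒞, K ⊆ C) ∧
  (∀ C ∈ 𝒞, (H.induce (C : Set VH)).Colorable s)

/-- If `𝒞` is a minimum `s`-clique cover of the pattern graph `H`, `C₁ ∈ 𝒞`, and the
graph `G*` built from `G`, `H` and `C₁` contains a subgraph isomorphic to `H`
(i.e. there is an injective homomorphism of `H` into `G*`), then `G` contains an
`s`-clique. -/
theorem Gstar_subgraph_gives_clique {VG VH : Type*} [DecidableEq VG] [DecidableEq VH]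
    (G : SimpleGraph VG) (H : SimpleGraph VH) (s : ℕ) (hs : 0 < s)
    (𝒞 : Finset (Finset VH)) (C1 : Finset VH) (hC1 : C1 ∈ 𝒞)
    (hcover : IsSCliqueCover H s 𝒞)
    (hmin : ∀ 𝒟 : Finset (Finset VH), IsSCliqueCover H s 𝒟 → 𝒞.card ≤ 𝒟.card)
    (hsub : ∃ f : VH → (VG × (C1 : Set VH)) ⊕ {j : VH // j ∉ (C1 : Set VH)},
      Function.Injective f ∧
      ∀ i j : VH, H.Adj i j → (GstarGraph G H (C1 : Set VH)).Adj (f i) (f j)) :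
    ∃ K : Finset VG, G.IsNClique s K := by
  classical
  by_contra hcon
  push_neg at hcon
  obtain ⟨f, hfinj, hfadj⟩ := hsub
  let φ : VH → VH := fun x =>
    match f x with
    | Sum.inl p => (p.2 : VH)
    | Sum.inr j => (j : VH)
  have φinl : ∀ (x : VH) (v : VG) (i : (C1 : Set VH)), f x = Sum.inl (v, i) → φ x = i := by
    intro x v i h
    simp only [φ, h]
  have φinr : ∀ (x : VH) (j : {j : VH // j ∉ (C1 : Set VH)}), f x = Sum.inr j → φ x = j := by
    intro x j h
    simp only [φ, h]
  have hom : ∀ x y, H.Adj x y → H.Adj (φ x) (φ y) := by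
    intro x y hxy
    have hA := hfadj x y hxy
    rcases h1 : f x with ⟨v, i⟩ | i <;> rcases h2 : f y with ⟨u, j⟩ | j <;>
        rw [h1, h2] at hA
    · rw [φinl x v i h1, φinl y u j h2]; exact hA.1
    · rw [φinl x v i h1, φinr y j h2]; exact hA
    · rw [φinr x i h1, φinl y u j h2]; exact hA
    · rw [φinr x i h1, φinr y j h2]; exact hA
  have key : ∀ K : Finset VH, H.IsNClique s K → ∃ x ∈ K, φ x ∉ (C1 : Finset VH) := by
    intro K hK
    by_contra hall
    push_neg at hall
    have hg : ∀ x, x ∈ K → ∃ v, ∃ i : (C1 : Set VH), f x = Sum.inl (v, i) := by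
      intro x hx
      rcases h1 : f x with ⟨v, i⟩ | j
      · exact ⟨v, i, rfl⟩
      · exfalso
        have hmem := hall x hx
        rw [φinr x j h1] at hmem
        exact j.2 (by simpa using hmem)
    have hK0 : K.Nonempty := by
      rw [← Finset.card_pos, hK.2]; exact hs
    obtain ⟨x0, hx0⟩ := hK0
    obtain ⟨v0, i0, -⟩ := hg x0 hx0
    haveI : Nonempty VG := ⟨v0⟩
    haveI : Nonempty (C1 : Set VH) := ⟨i0⟩
    choose! g ig hgi using hg
    have adjG : ∀ x ∈ K, ∀ y ∈ K, x ≠ y → G.Adj (g x) (g y) := by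
      intro x hx y hy hne
      have hH := hK.1 hx hy hne
      have hA := hfadj x y hH
      rw [hgi x hx, hgi y hy] at hA
      exact hA.2
    refine hcon (K.image g) ⟨?_, ?_⟩
    · intro a ha b hb hab
      simp only [Finset.coe_image, Set.mem_image, Finset.mem_coe] at ha hb
      obtain ⟨x, hx, rfl⟩ := ha
      obtain ⟨y, hy, rfl⟩ := hb
      have hxy : x ≠ y := fun h => hab (by rw [h])
      exact adjG x hx y hy hxy
    · rw [Finset.card_image_of_injOn, hK.2]
      intro x hx y hy hxy
      by_contra hne
      exact G.loopless.irrefl _ (hxy ▸ adjG x hx y hy hne)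
  set W : Finset VH := 𝒞.sup id with hW
  have hKW : ∀ K : Finset VH, H.IsNClique s K → K ⊆ W := by
    intro K hK
    obtain ⟨C, hC, hsubC⟩ := hcover.1 K hK
    exact hsubC.trans (Finset.le_sup (f := id) hC)
  set 𝒟 : Finset (Finset VH) :=
    (𝒞.erase C1).image (fun C => W.filter (fun x => φ x ∈ C)) with h𝒟
  have hcov : IsSCliqueCover H s 𝒟 := by
    constructor
    · intro K hK
      have hK' : H.IsNClique s (K.image φ) := by
        constructor
        · intro a ha b hb hab
          simp only [Finset.coe_image, Set.mem_image, Finset.mem_coe] at ha hb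
          obtain ⟨x, hx, rfl⟩ := ha
          obtain ⟨y, hy, rfl⟩ := hb
          have hxy : x ≠ y := fun h => hab (by rw [h])
          exact hom x y (hK.1 hx hy hxy)
        · rw [Finset.card_image_of_injOn, hK.2]
          intro x hx y hy hxy
          by_contra hne
          exact H.loopless.irrefl _ (hxy ▸ hom x y (hK.1 hx hy hne))
      obtain ⟨C, hC, hsubC⟩ := hcover.1 _ hK'
      have hne : C ≠ C1 := by
        rintro rfl
        obtain ⟨x, hx, hnx⟩ := key K hK
        exact hnx (hsubC (Finset.mem_image_of_mem φ hx))
      refine ⟨W.filter (fun x => φ x ∈ C), ?_, ?_⟩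
      · exact Finset.mem_image_of_mem _ (Finset.mem_erase.2 ⟨hne, hC⟩)
      · intro x hx
        exact Finset.mem_filter.2 ⟨hKW K hK hx, hsubC (Finset.mem_image_of_mem φ hx)⟩
    · intro D hD
      simp only [h𝒟, Finset.mem_image] at hD
      obtain ⟨C, hC, rfl⟩ := hD
      obtain ⟨c⟩ := hcover.2 C (Finset.mem_of_mem_erase hC)
      refine ⟨c.comp ⟨fun x => ⟨φ x.1, ?_⟩, ?_⟩⟩
      · have hx := x.2
        simp only [Finset.coe_filter, Set.mem_setOf_eq] at hx
        exact hx.2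
      · intro a b hab
        exact hom a.1 b.1 hab
  have hle := hmin 𝒟 hcov
  have h1 : 𝒟.card ≤ (𝒞.erase C1).card := Finset.card_image_le
  have h2 : (𝒞.erase C1).card < 𝒞.card := Finset.card_erase_lt_of_mem hC1
  omega
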